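/- Let r, s be positive integers with r ≤ s. Then there exist h ≤ s, elements c_0,…,c_h in the image of F, and a K-linear combination M of Markov elements such that every trace τ_3 on TL̂_3(q) satisfies τ_3( g_{a_3}·F(t_{a_2})·(g_{σ_1}F(t_{a_2}))^s · g_{a_3} · (g_{σ_1}F(t_{a_2}))^r ) = τ_3( Σ_{j=0}^{h} c_j·Y^j + M ). -/

import Mathlib

open FreeAlgebra

/-- `V(x,y) = x y x + x y + y x + x + y + 1`. -/
def Vel {R : Type*} [Ring R] (x y : R) : R :=
  x * y * x + x * y + y * x + x + y + 1

/-- Defining relations of the affine Temperley–Lieb algebra `TL̂_{n+1}(q)` of type `Ã_n`.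
Generators are indexed by `Fin (n+1)`: for `i < n` the index `i` stands for `g_{σ_{i+1}}`,
and the index `n` (i.e. `Fin.last n`) stands for `g_{a_{n+1}}`.  For `n = 1` only the
quadratic relations remain, so `TLhat K q 1` is `TL̂_2(q)` (with generators
`t_{σ_1} = g 0` and `t_{a_2} = g 1`). -/
inductive ATLRel (K : Type*) [CommRing K] (q : K) (n : ℕ) :
    FreeAlgebra K (Fin (n + 1)) → FreeAlgebra K (Fin (n + 1)) → Prop
  | quad (i : Fin (n + 1)) :
      ATLRel K q n (ι K i * ι K i) ((q - 1) • ι K i + algebraMap K _ q)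
  | comm_ss (i j : Fin (n + 1)) (hi : (i : ℕ) < n) (hj : (j : ℕ) < n)
      (hd : 2 ≤ Nat.dist (i : ℕ) (j : ℕ)) :
      ATLRel K q n (ι K i * ι K j) (ι K j * ι K i)
  | comm_sa (hn : 2 ≤ n) (i : Fin (n + 1)) (h1 : 1 ≤ (i : ℕ)) (h2 : (i : ℕ) + 2 ≤ n) :
      ATLRel K q n (ι K i * ι K (Fin.last n)) (ι K (Fin.last n) * ι K i)
  | braid_ss (i j : Fin (n + 1)) (hj : (j : ℕ) < n) (hij : (j : ℕ) = (i : ℕ) + 1) :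
      ATLRel K q n (ι K i * ι K j * ι K i) (ι K j * ι K i * ι K j)
  | braid_sa (hn : 2 ≤ n) (i : Fin (n + 1)) (h : (i : ℕ) = 0 ∨ (i : ℕ) + 1 = n) :
      ATLRel K q n (ι K i * ι K (Fin.last n) * ι K i)
        (ι K (Fin.last n) * ι K i * ι K (Fin.last n))
  | v_ss (i j : Fin (n + 1)) (hj : (j : ℕ) < n) (hij : (j : ℕ) = (i : ℕ) + 1) :
      ATLRel K q n (Vel (ι K i) (ι K j)) 0
  | v_s1a (hn : 2 ≤ n) (i : Fin (n + 1)) (hi : (i : ℕ) = 0) :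
      ATLRel K q n (Vel (ι K i) (ι K (Fin.last n))) 0
  | v_sna (hn : 2 ≤ n) (i : Fin (n + 1)) (hi : (i : ℕ) + 1 = n) :
      ATLRel K q n (Vel (ι K i) (ι K (Fin.last n))) 0

/-- The affine Temperley–Lieb algebra `TL̂_{n+1}(q)`. -/
abbrev TLhat (K : Type*) [CommRing K] (q : K) (n : ℕ) :=
  RingQuot (ATLRel K q n)

/-- Defining relations of the type `A` Temperley–Lieb algebra `TL_n(q)` with `n`
generators `g_{σ_1}, …, g_{σ_n}`; index `i : Fin n` stands for `g_{σ_{i+1}}`. -/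
inductive TLARel (K : Type*) [CommRing K] (q : K) (n : ℕ) :
    FreeAlgebra K (Fin n) → FreeAlgebra K (Fin n) → Prop
  | quad (i : Fin n) :
      TLARel K q n (ι K i * ι K i) ((q - 1) • ι K i + algebraMap K _ q)
  | comm (i j : Fin n) (hd : 2 ≤ Nat.dist (i : ℕ) (j : ℕ)) :
      TLARel K q n (ι K i * ι K j) (ι K j * ι K i)
  | braid (i j : Fin n) (hij : (j : ℕ) = (i : ℕ) + 1) :
      TLARel K q n (ι K i * ι K j * ι K i) (ι K j * ι K i * ι K j)
  | vrel (i j : Fin n) (hij : (j : ℕ) = (i : ℕ) + 1) :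
      TLARel K q n (Vel (ι K i) (ι K j)) 0

/-- The Temperley–Lieb algebra `TL_n(q)` of type `A` (abstract presentation). -/
abbrev TLA (K : Type*) [CommRing K] (q : K) (n : ℕ) :=
  RingQuot (TLARel K q n)

variable (K : Type*) [CommRing K] (q : K) (n : ℕ)

/-- The generator `g_i` of `TL̂_{n+1}(q)`. -/
noncomputable def gg (i : Fin (n + 1)) : TLhat K q n :=
  RingQuot.mkAlgHom K (ATLRel K q n) (ι K i)

/-- The inverse `q⁻¹ (g_i - (q-1))` of the generator `g_i` of `TL̂_{n+1}(q)`. -/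
noncomputable def ggInv [Invertible q] (i : Fin (n + 1)) : TLhat K q n :=
  ⅟q • (gg K q n i - algebraMap K _ (q - 1))

/-- The generator `g_{σ_{i+1}}` of `TL_n(q)`. -/
noncomputable def ga (i : Fin n) : TLA K q n :=
  RingQuot.mkAlgHom K (TLARel K q n) (ι K i)

/-- The inverse `q⁻¹ (g - (q-1))` of a generator of `TL_n(q)`. -/
noncomputable def gaInv [Invertible q] (i : Fin n) : TLA K q n :=
  ⅟q • (ga K q n i - algebraMap K _ (q - 1))

/-- The index of `g_{σ_n}` in `TL̂_{n+1}(q)`. -/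
def sigmaTop : Fin (n + 1) := ⟨n - 1, Nat.lt_succ_of_le (Nat.sub_le n 1)⟩

/-- The index of `g_{σ_{n-1}}` in `TL̂_{n+1}(q)`. -/
def sigmaSub : Fin (n + 1) := ⟨n - 2, Nat.lt_succ_of_le (Nat.sub_le n 2)⟩

/-- `F` is the canonical homomorphism `F_n : TL̂_n(q) → TL̂_{n+1}(q)`, determined by
`t_{σ_i} ↦ g_{σ_i}` for `1 ≤ i ≤ n-1` and `t_{a_n} ↦ g_{σ_n} g_{a_{n+1}} g_{σ_n}⁻¹`. -/
def IsF [Invertible q] (F : TLhat K q (n - 1) →ₐ[K] TLhat K q n) : Prop :=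
  (∀ i : Fin (n - 1 + 1), (i : ℕ) < n - 1 →
      F (gg K q (n - 1) i) =
        gg K q n (Fin.castLE (Nat.succ_le_succ (Nat.sub_le n 1)) i)) ∧
  F (gg K q (n - 1) (Fin.last (n - 1))) =
    gg K q n (sigmaTop n) * gg K q n (Fin.last n) * ggInv K q n (sigmaTop n)

/-- Markov elements: `A g_{σ_n}^ε B` with `A, B` in the image of `F_n` and `ε ∈ {0,1}`. -/
def IsMarkov [Invertible q] (F : TLhat K q (n - 1) →ₐ[K] TLhat K q n)
    (x : TLhat K q n) : Prop :=
  ∃ A B : TLhat K q (n - 1), ∃ ε : ℕ, ε ≤ 1 ∧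
    x = F A * gg K q n (sigmaTop n) ^ ε * F B

/-- A trace on a `K`-algebra `R`: a `K`-linear map with `τ(xy) = τ(yx)`. -/
def IsTrace {R : Type*} [Ring R] [Algebra K R] (τ : R →ₗ[K] K) : Prop :=
  ∀ x y : R, τ (x * y) = τ (y * x)

/-- The Dynkin automorphism `ψ` of `TL̂_{n+1}(q)`: `g_i ↦ g_{i+1}` cyclically, i.e.
`g_{σ_1} ↦ g_{σ_2} ↦ ⋯ ↦ g_{σ_n} ↦ g_{a_{n+1}} ↦ g_{σ_1}`. -/
def IsDynkin (ψ : TLhat K q n ≃ₐ[K] TLhat K q n) : Prop :=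
  ∀ i : Fin (n + 1), ψ (gg K q n i) = gg K q n (i + 1)

/-- `X = g_{σ_n} g_{σ_{n-1}} ⋯ g_{σ_1} g_{a_{n+1}}`. -/
noncomputable def Xel : TLhat K q n :=
  (List.ofFn fun t : Fin n =>
      gg K q n ⟨n - 1 - (t : ℕ),
        Nat.lt_succ_of_le (le_trans (Nat.sub_le _ _) (Nat.sub_le _ _))⟩).prod *
    gg K q n (Fin.last n)

/-- `Z = g_{σ_{n-1}} g_{σ_{n-2}} ⋯ g_{σ_1} · F_n(t_{a_n})`. -/
noncomputable def Zel [Invertible q] (F : TLhat K q (n - 1) →ₐ[K] TLhat K q n) :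
    TLhat K q n :=
  (List.ofFn fun t : Fin (n - 1) =>
      gg K q n ⟨n - 2 - (t : ℕ),
        Nat.lt_succ_of_le (le_trans (Nat.sub_le _ _) (Nat.sub_le _ _))⟩).prod *
    F (gg K q (n - 1) (Fin.last (n - 1)))

/-- `g_{σ_n} g_{σ_{n-1}} ⋯ g_{σ_i}`, with the convention that it is `1` when `i = n + 1`. -/
noncomputable def tailChain (i : ℕ) : TLhat K q n :=
  (List.ofFn fun t : Fin (n + 1 - i) =>
      gg K q n ⟨n - 1 - (t : ℕ),
        Nat.lt_succ_of_le (le_trans (Nat.sub_le _ _) (Nat.sub_le _ _))⟩).prod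

/-- `g_{σ_{i₀}} g_{σ_{i₀ - 1}} ⋯ g_{σ_1}`, with the convention that it is `1` when `i₀ = 0`. -/
noncomputable def headChain (i₀ : ℕ) (h : i₀ ≤ n) : TLhat K q n :=
  (List.ofFn fun t : Fin i₀ =>
      gg K q n ⟨i₀ - 1 - (t : ℕ),
        Nat.lt_succ_of_le (le_trans (le_trans (Nat.sub_le _ _) (Nat.sub_le _ _)) h)⟩).prod

/-- `TL_n(q)` realized as the subalgebra of `TL̂_{n+1}(q)` generated by `g_{σ_1}, …, g_{σ_n}`. -/
noncomputable def TLsub : Subalgebra K (TLhat K q n) :=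
  Algebra.adjoin K (Set.range fun i : Fin n => gg K q n (Fin.castSucc i))

/-- The generator `g_{σ_{i+1}}` as an element of the subalgebra `TL_n(q)`. -/
noncomputable def sgen (i : Fin n) : TLsub K q n :=
  ⟨gg K q n (Fin.castSucc i), Algebra.subset_adjoin (Set.mem_range_self i)⟩

/-- The inverse `q⁻¹ (g - (q-1))` of `sgen` inside `TL_n(q)`. -/
noncomputable def sgenInv [Invertible q] (i : Fin n) : TLsub K q n :=
  ⅟q • (sgen K q n i - algebraMap K _ (q - 1))

/-- `g_{σ_1} ⋯ g_{σ_{n-1}} g_{σ_n} g_{σ_{n-1}}⁻¹ ⋯ g_{σ_1}⁻¹` in `TL̂_{n+1}(q)`. -/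
noncomputable def EnTarget [Invertible q] : TLhat K q n :=
  (List.ofFn fun t : Fin (n - 1) =>
      gg K q n (Fin.castLE (le_trans (Nat.sub_le n 1) (Nat.le_succ n)) t)).prod *
    gg K q n (sigmaTop n) *
    (List.ofFn fun t : Fin (n - 1) =>
      ggInv K q n ⟨n - 2 - (t : ℕ),
        Nat.lt_succ_of_le (le_trans (Nat.sub_le _ _) (Nat.sub_le _ _))⟩).prod

/-- `E` is the canonical homomorphism `E_n : TL̂_{n+1}(q) → TL_n(q)`, determined by
`g_{σ_i} ↦ g_{σ_i}` for `1 ≤ i ≤ n` and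
`g_{a_{n+1}} ↦ g_{σ_1} ⋯ g_{σ_{n-1}} g_{σ_n} g_{σ_{n-1}}⁻¹ ⋯ g_{σ_1}⁻¹`. -/
def IsE [Invertible q] (E : TLhat K q n →ₐ[K] TLsub K q n) : Prop :=
  (∀ i : Fin n,
    (E (gg K q n (Fin.castSucc i)) : TLhat K q n) = gg K q n (Fin.castSucc i)) ∧
  (E (gg K q n (Fin.last n)) : TLhat K q n) = EnTarget K q n

namespace L518

variable {K : Type*} [CommRing K] (q : K) [Invertible q]

local notation "R2" => TLhat K q 2

noncomputable def bb : R2 := gg K q 2 0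
noncomputable def cc : R2 := gg K q 2 1
noncomputable def aa : R2 := gg K q 2 2
noncomputable def bi : R2 := ggInv K q 2 0
noncomputable def ci : R2 := ggInv K q 2 1
noncomputable def uu : R2 := cc q * aa q * ci q
noncomputable def YY : R2 := cc q * bb q * aa q

lemma rel_eq {x y : FreeAlgebra K (Fin 3)} (h : ATLRel K q 2 x y) :
    RingQuot.mkAlgHom K (ATLRel K q 2) x = RingQuot.mkAlgHom K (ATLRel K q 2) y :=
  RingQuot.mkAlgHom_rel K h

lemma quad (i : Fin 3) :
    gg K q 2 i * gg K q 2 i = (q - 1) • gg K q 2 i + q • 1 := by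
  have h := rel_eq q (ATLRel.quad i)
  simp only [map_mul, map_add, map_smul, AlgHom.commutes] at h
  rw [Algebra.algebraMap_eq_smul_one] at h
  exact h

lemma braid_bc : bb q * cc q * bb q = cc q * bb q * cc q := by
  have h := rel_eq q (ATLRel.braid_ss (0 : Fin 3) 1 (by norm_num) (by norm_num))
  simp only [map_mul] at h; exact h

lemma braid_ba : bb q * aa q * bb q = aa q * bb q * aa q := by
  have h := rel_eq q (ATLRel.braid_sa (by norm_num) (0 : Fin 3) (Or.inl rfl))
  have h2 : Fin.last 2 = (2 : Fin 3) := rfl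
  simp only [map_mul, h2] at h; exact h

lemma braid_ca : cc q * aa q * cc q = aa q * cc q * aa q := by
  have h := rel_eq q (ATLRel.braid_sa (by norm_num) (1 : Fin 3) (Or.inr rfl))
  have h2 : Fin.last 2 = (2 : Fin 3) := rfl
  simp only [map_mul, h2] at h; exact h

end L518
namespace L518

set_option linter.unusedSectionVars false
set_option maxHeartbeats 1000000

variable {K : Type*} [CommRing K] (q : K) [Invertible q]

local notation "b'" => bb q
local notation "c'" => cc q
local notation "a'" => aa q
local notation "u'" => uu q
local notation "Y'" => YY q
local notation "bi'" => bi q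
local notation "ci'" => ci q

lemma ci_def : ci' = ⅟q • (c' - (q-1) • 1) := by
  rw [ci, ggInv, Algebra.algebraMap_eq_smul_one]; rfl

lemma bi_def : bi' = ⅟q • (b' - (q-1) • 1) := by
  rw [bi, ggInv, Algebra.algebraMap_eq_smul_one]; rfl

lemma quad_b : b' * b' = (q - 1) • b' + q • 1 := quad q 0
lemma quad_c : c' * c' = (q - 1) • c' + q • 1 := quad q 1
lemma quad_a : a' * a' = (q - 1) • a' + q • 1 := quad q 2

section inv
variable (g gi : TLhat K q 2) (hgi : gi = ⅟q • (g - (q-1) • 1))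
    (hg : g * g = (q - 1) • g + q • 1)

include hgi hg

lemma mul_ginv : g * gi = 1 := by
  rw [hgi, mul_smul_comm, mul_sub, hg, mul_smul_comm, mul_one]
  rw [show (q-1) • g + q • (1 : TLhat K q 2) - (q-1) • g = q • 1 by abel]
  rw [smul_smul, invOf_mul_self, one_smul]

lemma ginv_mul : gi * g = 1 := by
  rw [hgi, smul_mul_assoc, sub_mul, hg, smul_mul_assoc, one_mul]
  rw [show (q-1) • g + q • (1 : TLhat K q 2) - (q-1) • g = q • 1 by abel]
  rw [smul_smul, invOf_mul_self, one_smul]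

end inv

lemma c_ci : c' * ci' = 1 := mul_ginv q _ _ (ci_def q) (quad_c q)
lemma ci_c : ci' * c' = 1 := ginv_mul q _ _ (ci_def q) (quad_c q)
lemma b_bi : b' * bi' = 1 := mul_ginv q _ _ (bi_def q) (quad_b q)
lemma bi_b : bi' * b' = 1 := ginv_mul q _ _ (bi_def q) (quad_b q)

lemma ci_c_cancel (x : TLhat K q 2) : ci' * (c' * x) = x := by
  rw [← mul_assoc, ci_c, one_mul]
lemma c_ci_cancel (x : TLhat K q 2) : c' * (ci' * x) = x := by
  rw [← mul_assoc, c_ci, one_mul]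
lemma bi_b_cancel (x : TLhat K q 2) : bi' * (b' * x) = x := by
  rw [← mul_assoc, bi_b, one_mul]

/- parametrized right-assoc rules -/
lemma braid_bc_r (x : TLhat K q 2) : b' * (c' * (b' * x)) = c' * (b' * (c' * x)) := by
  rw [← mul_assoc, ← mul_assoc, braid_bc, mul_assoc, mul_assoc]
lemma braid_ba_r (x : TLhat K q 2) : b' * (a' * (b' * x)) = a' * (b' * (a' * x)) := by
  rw [← mul_assoc, ← mul_assoc, braid_ba, mul_assoc, mul_assoc]
lemma braid_ca_r (x : TLhat K q 2) : c' * (a' * (c' * x)) = a' * (c' * (a' * x)) := by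
  rw [← mul_assoc, ← mul_assoc, braid_ca, mul_assoc, mul_assoc]
lemma quad_b_r (x : TLhat K q 2) : b' * (b' * x) = (q - 1) • (b' * x) + q • x := by
  rw [← mul_assoc, quad_b, add_mul, smul_mul_assoc, smul_mul_assoc, one_mul]
lemma quad_c_r (x : TLhat K q 2) : c' * (c' * x) = (q - 1) • (c' * x) + q • x := by
  rw [← mul_assoc, quad_c, add_mul, smul_mul_assoc, smul_mul_assoc, one_mul]
lemma quad_a_r (x : TLhat K q 2) : a' * (a' * x) = (q - 1) • (a' * x) + q • x := by
  rw [← mul_assoc, quad_a, add_mul, smul_mul_assoc, smul_mul_assoc, one_mul]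

lemma Y_ra : Y' = c' * (b' * a') := by rw [YY, mul_assoc]
lemma u_ra : u' = c' * (a' * ci') := by rw [uu, mul_assoc]

/-- u c = c a -/
lemma uc : u' * c' = c' * a' := by
  rw [uu, mul_assoc, ci_c, mul_one]

/-- a u = c a -/
lemma au : a' * u' = c' * a' := by
  rw [uu, ← mul_assoc, ← mul_assoc, ← braid_ca, mul_assoc, c_ci, mul_one]

/-- a = ci u c -/
lemma a_eq : ci' * u' * c' = a' := by
  rw [uu]; simp only [mul_assoc]; rw [ci_c, mul_one, ci_c_cancel]

/-- Y b = u Y -/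
lemma Yb : Y' * b' = u' * Y' := by
  rw [Y_ra, u_ra]
  calc c' * (b' * a') * b' = c' * (b' * (a' * (b' * 1))) := by
        simp only [mul_assoc, mul_one]
    _ = c' * (a' * (b' * (a' * 1))) := by rw [braid_ba_r]
    _ = c' * (a' * (ci' * (c' * (b' * (a' * 1))))) := by rw [ci_c_cancel]
    _ = c' * (a' * ci') * (c' * (b' * a')) := by simp only [mul_assoc, mul_one]

/-- Y u = b Y -/
lemma Yu : Y' * u' = b' * Y' := by
  have h1 : Y' * u' = c' * (b' * (a' * u')) := by rw [Y_ra]; simp only [mul_assoc]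
  rw [h1, au, Y_ra, braid_bc_r]

/-- Y a = (q-1) Y + q (c b) -/
lemma Ya : Y' * a' = (q - 1) • Y' + q • (c' * b') := by
  have h1 : Y' * a' = c' * b' * (a' * a') := by rw [YY]; simp only [mul_assoc]
  rw [h1, quad_a, mul_add, mul_smul_comm, mul_smul_comm, mul_one, ← YY]

/-- c Y = (q-1) Y + q (b a) -/
lemma cY : c' * Y' = (q - 1) • Y' + q • (b' * a') := by
  have h1 : c' * Y' = c' * c' * (b' * a') := by rw [Y_ra]; simp only [mul_assoc]
  rw [h1, quad_c, add_mul, smul_mul_assoc, smul_mul_assoc, one_mul, ← Y_ra]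

/-- ci Y = b a -/
lemma ciY : ci' * Y' = b' * a' := by rw [Y_ra, ci_c_cancel]

/-- a = bi ci Y -/
lemma a_eq' : bi' * (ci' * Y') = a' := by
  rw [ciY, ← mul_assoc, bi_b, one_mul]

/-- c (b u) c = b Y -/
lemma cbuc : c' * (b' * u') * c' = b' * Y' := by
  have h1 : c' * (b' * u') * c' = c' * b' * (u' * c') := by simp only [mul_assoc]
  rw [h1, uc, Y_ra, mul_assoc, braid_bc_r]

/-- c (b u) = b Y ci -/
lemma cbu : c' * (b' * u') = b' * Y' * ci' := by
  rw [← cbuc, mul_assoc _ _ ci', c_ci, mul_one]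

end L518
namespace L518

set_option linter.unusedSectionVars false
set_option maxHeartbeats 1000000

variable {K : Type*} [CommRing K] (q : K) [Invertible q]

local notation "b'" => bb q
local notation "c'" => cc q
local notation "a'" => aa q
local notation "u'" => uu q
local notation "Y'" => YY q
local notation "bi'" => bi q
local notation "ci'" => ci q

lemma ci_expand (x : TLhat K q 2) :
    ci' * x = ⅟q • (c' * x) - (⅟q * (q-1)) • x := by
  rw [ci_def, smul_mul_assoc, sub_mul, smul_mul_assoc, one_mul, smul_sub, smul_smul]

lemma bi_expand (x : TLhat K q 2) :
    bi' * x = ⅟q • (b' * x) - (⅟q * (q-1)) • x := by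
  rw [bi_def, smul_mul_assoc, sub_mul, smul_mul_assoc, one_mul, smul_sub, smul_smul]

lemma ci_expand' (x : TLhat K q 2) :
    x * ci' = ⅟q • (x * c') - (⅟q * (q-1)) • x := by
  rw [ci_def, mul_smul_comm, mul_sub, mul_smul_comm, mul_one, smul_sub, smul_smul]

lemma q_smul_ci (x : TLhat K q 2) : q • (ci' * x) = c' * x - (q-1) • x := by
  rw [ci_expand, smul_sub, smul_smul, smul_smul, mul_invOf_self, one_smul]
  congr 1
  rw [show q * (⅟q * (q-1)) = (q * ⅟q) * (q-1) by ring, mul_invOf_self, one_mul]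

/-- q • (a ci) = a c - (q-1) a -/
lemma q_a_ci : q • (a' * ci') = a' * c' - (q-1) • a' := by
  have h : a' * ci' = a' * (ci' * 1) := by rw [mul_one]
  rw [h, ← mul_smul_comm, q_smul_ci, mul_sub, mul_one, mul_smul_comm, mul_one]

/-- key expansion: b (c (b u)) = (q-1) (c (b u)) + q (c (b (a ci))) -/
lemma bcbu : b' * (c' * (b' * u')) =
    (q-1) • (c' * (b' * u')) + q • (c' * (b' * (a' * ci'))) := by
  rw [braid_bc_r]
  have h1 : c' * u' = (q-1) • u' + q • (a' * ci') := by
    rw [u_ra, quad_c_r, ← u_ra]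
  rw [h1, mul_add, mul_add, mul_smul_comm, mul_smul_comm, mul_smul_comm, mul_smul_comm]

/-- F25 : Y c = (q-1) Y + b (c (b u)) - (q-1) (c (b u)) -/
lemma Yc : Y' * c' =
    (q - 1) • Y' + (b' * (c' * (b' * u')) - (q-1) • (c' * (b' * u'))) := by
  have h1 : Y' * c' = c' * (b' * (a' * c')) := by rw [Y_ra]; simp only [mul_assoc]
  have h2 : a' * c' = (q-1) • a' + q • (a' * ci') := by rw [q_a_ci]; abel
  rw [h1, h2, bcbu]
  simp only [mul_add, mul_smul_comm, ← Y_ra]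
  abel

/-- F18 : Y (c Y) = (q-1) (Y Y) + (q(q-1)) (u Y) + q² (u (c b)) -/
lemma YcY : Y' * (c' * Y') = (q-1) • (Y' * Y') + (q * (q-1)) • (u' * Y')
    + (q * q) • (u' * (c' * b')) := by
  rw [cY, mul_add, mul_smul_comm, mul_smul_comm]
  have h1 : Y' * (b' * a') = (q-1) • (u' * Y') + q • (u' * (c' * b')) := by
    rw [← mul_assoc, Yb, mul_assoc, Ya, mul_add, mul_smul_comm, mul_smul_comm]
  rw [h1, smul_add, smul_smul, smul_smul]
  abel

/-- c (b ci) = ⅟q (b (c b)) - ⅟q(q-1) (c b) -/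
lemma cbci : c' * (b' * ci') = ⅟q • (b' * (c' * b')) - (⅟q * (q-1)) • (c' * b') := by
  rw [← mul_assoc, ci_expand', ← braid_bc]
  simp only [mul_assoc]

/-- bi (ci x) expansion into 4 terms -/
lemma bici (x : TLhat K q 2) : bi' * (ci' * x) =
    (⅟q * ⅟q) • (b' * (c' * x)) - (⅟q * ⅟q * (q-1)) • (b' * x)
    - (⅟q * (q-1) * ⅟q) • (c' * x) + (⅟q * (q-1) * ⅟q * (q-1)) • x := by
  rw [ci_expand, mul_sub, bi_expand, bi_expand]
  simp only [mul_smul_comm, smul_sub, smul_smul]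
  match_scalars <;> ring

/-- c (bi (ci x)) expansion -/
lemma cbici (x : TLhat K q 2) : c' * (bi' * (ci' * x)) =
    (⅟q * ⅟q) • (b' * (c' * (b' * x))) - (⅟q * ⅟q * (q-1)) • (c' * (b' * x))
    - (⅟q * (q-1)) • x := by
  rw [bici, mul_add, mul_sub, mul_sub, mul_smul_comm, mul_smul_comm, mul_smul_comm,
    mul_smul_comm, quad_c_r, ← braid_bc_r]
  rw [smul_add, smul_smul, smul_smul]
  have s2 : ⅟q * (q-1) * ⅟q * q = ⅟q * (q-1) := by
    rw [show ⅟q * (q-1) * ⅟q * q = ⅟q * (q-1) * (⅟q * q) by ring, invOf_mul_self,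
      mul_one]
  rw [s2]
  abel

end L518
namespace L518

set_option linter.unusedSectionVars false
set_option maxHeartbeats 1000000

variable {K : Type*} [CommRing K] (q : K) [Invertible q]

local notation "b'" => bb q
local notation "c'" => cc q
local notation "a'" => aa q
local notation "u'" => uu q
local notation "Y'" => YY q
local notation "bi'" => bi q
local notation "ci'" => ci q

/-- evaluation of a word in `{b, u}` (ff ↦ b, tt ↦ u) -/
noncomputable def evW : List Bool → TLhat K q 2
  | [] => 1
  | t :: w => (if t then uu q else bb q) * evW w

@[simp] lemma evW_nil : evW q [] = 1 := rfl
@[simp] lemma evW_cons (t : Bool) (w : List Bool) :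
    evW q (t :: w) = (if t then uu q else bb q) * evW q w := rfl

@[simp] lemma evW_ff (w : List Bool) : evW q (false :: w) = bb q * evW q w := rfl
@[simp] lemma evW_tt (w : List Bool) : evW q (true :: w) = uu q * evW q w := rfl

lemma evW_append (w1 w2 : List Bool) :
    evW q (w1 ++ w2) = evW q w1 * evW q w2 := by
  induction w1 with
  | nil => simp
  | cons t w ih => simp [ih, mul_assoc]

/-- Y (ev w) = ev (¬w) Y -/
lemma Y_evW (w : List Bool) :
    Y' * evW q w = evW q (w.map not) * Y' := by
  induction w with
  | nil => simp
  | cons t w ih =>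
    simp only [evW_cons, List.map_cons]
    rw [← mul_assoc, show Y' * (if t then uu q else bb q)
        = (if (!t) then uu q else bb q) * Y' from by
      cases t
      · simpa using Yb q
      · simpa using Yu q]
    rw [mul_assoc, ih, ← mul_assoc]

lemma map_not_not (w : List Bool) : (w.map not).map not = w := by
  simp [List.map_map, Function.comp_def]

lemma evW_Y (w : List Bool) :
    evW q w * Y' = Y' * evW q (w.map not) := by
  have := Y_evW q (w.map not)
  rw [map_not_not] at this
  exact this.symm

/-- iterated not -/
def nIter (j : ℕ) (w : List Bool) : List Bool := (List.map not)^[j] w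

@[simp] lemma nIter_zero (w : List Bool) : nIter 0 w = w := rfl
lemma nIter_succ (j : ℕ) (w : List Bool) :
    nIter (j+1) w = nIter j (w.map not) := Function.iterate_succ_apply _ _ _

/-- ev w * Y^j = Y^j * ev (nIter j w) -/
lemma evW_Ypow (j : ℕ) (w : List Bool) :
    evW q w * Y' ^ j = Y' ^ j * evW q (nIter j w) := by
  induction j generalizing w with
  | zero => simp
  | succ j ih =>
    rw [pow_succ', ← mul_assoc, evW_Y, mul_assoc, ih, ← mul_assoc, nIter_succ]

lemma nIter_succ' (j : ℕ) (w : List Bool) :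
    nIter (j+1) w = (nIter j w).map not := Function.iterate_succ_apply' _ _ _

lemma nIter_nIter (j : ℕ) (w : List Bool) : nIter j (nIter j w) = w := by
  induction j generalizing w with
  | zero => rfl
  | succ j ih =>
    rw [nIter_succ j (nIter (j+1) w), nIter_succ' j w, map_not_not]
    exact ih w

lemma Ypow_evW (j : ℕ) (w : List Bool) :
    Y' ^ j * evW q w = evW q (nIter j w) * Y' ^ j := by
  have h := evW_Ypow q j (nIter j w)
  rw [nIter_nIter] at h
  exact h.symm

lemma Ypow_b (j : ℕ) : Y' ^ j * b' = evW q (nIter j [false]) * Y' ^ j := by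
  simpa [mul_one] using Ypow_evW q j [false]

lemma Ypow_u (j : ℕ) : Y' ^ j * u' = evW q (nIter j [true]) * Y' ^ j := by
  simpa [mul_one] using Ypow_evW q j [true]

/-- the word for (b u)^m -/
def wbu : ℕ → List Bool
  | 0 => []
  | m+1 => false :: true :: wbu m

lemma evW_wbu (m : ℕ) : evW q (wbu m) = (b' * u') ^ m := by
  induction m with
  | zero => simp [wbu]
  | succ m ih => rw [wbu, pow_succ', evW_cons, evW_cons, ih]; simp [mul_assoc]

/-- b ((u b)^m-word) u x = (b u)^(m+1) x  (at evW level) -/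
lemma bub_chain (m : ℕ) (x : TLhat K q 2) :
    b' * (evW q ((wbu m).map not) * (u' * x)) = (b' * u') ^ (m+1) * x := by
  induction m generalizing x with
  | zero => simp [wbu, pow_one, mul_assoc]
  | succ m ih =>
    rw [wbu]
    simp only [List.map_cons, Bool.not_false, Bool.not_true, evW_cons, if_true, if_false]
    calc b' * (u' * (b' * evW q ((wbu m).map not)) * (u' * x))
        = (b' * u') * (b' * (evW q ((wbu m).map not) * (u' * x))) := by
          simp only [mul_assoc]
      _ = (b' * u') * ((b' * u') ^ (m+1) * x) := by rw [ih]
      _ = (b' * u') ^ (m+2) * x := by rw [← mul_assoc, ← pow_succ']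

end L518
namespace L518

set_option linter.unusedSectionVars false
set_option maxHeartbeats 1000000

variable {K : Type*} [CommRing K] (q : K) [Invertible q]

local notation "b'" => bb q
local notation "c'" => cc q
local notation "a'" => aa q
local notation "u'" => uu q
local notation "Y'" => YY q
local notation "bi'" => bi q
local notation "ci'" => ci q

variable (s : ℕ) (F : TLhat K q 1 →ₐ[K] TLhat K q 2)

/-- span of commutators -/
noncomputable def Sc : Submodule K (TLhat K q 2) :=
  Submodule.span K {z | ∃ x y : TLhat K q 2, z = x * y - y * x}

/-- span of Markov elements -/
noncomputable def Smk : Submodule K (TLhat K q 2) :=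
  Submodule.span K {x | IsMarkov K q 2 F x}

/-- span of elements F w * Y^j, j ≤ s -/
noncomputable def Sty : Submodule K (TLhat K q 2) :=
  Submodule.span K {z | ∃ (w : TLhat K q 1) (j : ℕ), j ≤ s ∧ z = F w * (YY q) ^ j}

/-- the working submodule -/
noncomputable def SS : Submodule K (TLhat K q 2) := Sc q ⊔ Smk q F ⊔ Sty q s F

lemma Sc_le : Sc q ≤ SS q s F := le_trans le_sup_left le_sup_left
lemma Smk_le : Smk q F ≤ SS q s F := le_trans le_sup_right le_sup_left
lemma Sty_le : Sty q s F ≤ SS q s F := le_sup_right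

/-- rotation -/
lemma rot {x y : TLhat K q 2} (h : x * y ∈ SS q s F) : y * x ∈ SS q s F := by
  have hc : y * x - x * y ∈ Sc q := Submodule.subset_span ⟨y, x, rfl⟩
  have := Submodule.add_mem _ (Sc_le q s F hc) h
  simpa using this

lemma markov_mem (A B : TLhat K q 1) (ε : ℕ) (hε : ε ≤ 1) :
    F A * gg K q 2 (sigmaTop 2) ^ ε * F B ∈ SS q s F :=
  Smk_le q s F (Submodule.subset_span ⟨A, B, ε, hε, rfl⟩)

lemma gg_sigmaTop : gg K q 2 (sigmaTop 2) = c' := rfl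

lemma mk_mem1 (A B : TLhat K q 1) : F A * (c' * F B) ∈ SS q s F := by
  have h := markov_mem q s F A B 1 le_rfl
  rw [gg_sigmaTop, pow_one, mul_assoc] at h
  exact h

lemma mk_mem0 (A B : TLhat K q 1) : F A * F B ∈ SS q s F := by
  have h := markov_mem q s F A B 0 (by norm_num)
  rw [pow_zero, mul_one] at h
  exact h

lemma ty_mem (A : TLhat K q 1) (j : ℕ) (hj : j ≤ s) :
    F A * Y' ^ j ∈ SS q s F :=
  Sty_le q s F (Submodule.subset_span ⟨A, j, hj, rfl⟩)

/-- word evaluation in TL-hat-2 -/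
noncomputable def evT : List Bool → TLhat K q 1
  | [] => 1
  | t :: w => (if t then gg K q 1 1 else gg K q 1 0) * evT w

variable (hF : IsF K q 2 F)
include hF

lemma F_t0 : F (gg K q 1 0) = b' := by
  have h := hF.1 0 (by norm_num)
  simp at h; exact h

lemma F_t1 : F (gg K q 1 1) = u' := by
  have h := hF.2
  have h1 : Fin.last (2-1) = (1 : Fin 2) := rfl
  have h2 : Fin.last 2 = (2 : Fin 3) := rfl
  rw [h1, h2, gg_sigmaTop] at h
  rw [show ggInv K q 2 (sigmaTop 2) = ci q from rfl] at h
  rw [h, uu, aa]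

lemma F_evT (w : List Bool) : F (evT q w) = evW q w := by
  induction w with
  | nil => simp [evT, evW]
  | cons t w ih =>
    rw [evT, evW, map_mul, ih]
    cases t
    · simp [F_t0 q F hF]
    · simp [F_t1 q F hF]

/-- membership helpers in terms of words -/
lemma memM (w1 w2 : List Bool) : evW q w1 * (c' * evW q w2) ∈ SS q s F := by
  rw [← F_evT q F hF, ← F_evT q F hF]
  exact mk_mem1 q s F _ _

lemma memC (w : List Bool) : c' * evW q w ∈ SS q s F := by
  have h := memM q s F hF [] w
  simpa using h

lemma memW (w : List Bool) : evW q w ∈ SS q s F := by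
  have h := mk_mem0 q s F 1 (evT q w)
  rw [map_one, one_mul, F_evT q F hF] at h
  exact h

lemma memT (w : List Bool) (j : ℕ) (hj : j ≤ s) :
    evW q w * Y' ^ j ∈ SS q s F := by
  rw [← F_evT q F hF]
  exact ty_mem q s F _ j hj

lemma memTY (j : ℕ) (hj : j ≤ s) : Y' ^ j ∈ SS q s F := by
  have h := memT q s F hF [] j hj
  simpa using h

end L518
namespace L518

set_option linter.unusedSectionVars false
set_option maxHeartbeats 1000000

variable {K : Type*} [CommRing K] (q : K) [Invertible q]

local notation "b'" => bb q
local notation "c'" => cc q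
local notation "a'" => aa q
local notation "u'" => uu q
local notation "Y'" => YY q
local notation "bi'" => bi q
local notation "ci'" => ci q

variable (s : ℕ) (F : TLhat K q 1 →ₐ[K] TLhat K q 2) (hF : IsF K q 2 F)
include hF

/-- b' * a' ∈ S -/
lemma mem_ba : b' * a' ∈ SS q s F := by
  have h1 : b' * a' = (b' * (ci' * u')) * c' := by
    rw [← a_eq]; simp only [mul_assoc]
  rw [h1]
  apply rot
  have h2 : c' * (b' * (ci' * u')) = (c' * (b' * ci')) * u' := by
    simp only [mul_assoc]
  rw [h2, cbci, sub_mul, smul_mul_assoc, smul_mul_assoc]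
  apply Submodule.sub_mem
  · apply Submodule.smul_mem
    have := memM q s F hF [false] [false, true]
    simpa [mul_assoc] using this
  · apply Submodule.smul_mem
    have := memC q s F hF [false, true]
    simpa [mul_assoc] using this

/-- K_1 case v = [] : c' * Y' ∈ S -/
lemma mem_cY (hs : 1 ≤ s) : c' * Y' ∈ SS q s F := by
  rw [cY]
  apply Submodule.add_mem
  · apply Submodule.smul_mem
    have := memTY q s F hF 1 hs
    simpa using this
  · exact Submodule.smul_mem _ _ (mem_ba q s F hF)

/-- K_1 case v = ff :: v' -/
lemma mem_K1_cons (hs : 1 ≤ s) (v' : List Bool) :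
    c' * (evW q (false :: v') * Y') ∈ SS q s F := by
  have key : c' * (evW q (false :: v') * Y')
      = (q-1) • (Y' * (u' * evW q (v'.map not)))
        + q • (b' * (u' * (c' * evW q (v'.map not)))) := by
    calc c' * (evW q (false :: v') * Y')
        = c' * (b' * (evW q v' * Y')) := by simp [evW_cons, mul_assoc]
      _ = c' * (b' * (Y' * evW q (v'.map not))) := by rw [evW_Y]
      _ = c' * ((b' * Y') * evW q (v'.map not)) := by
          rw [← mul_assoc b' Y' (evW q (v'.map not))]
      _ = c' * ((Y' * u') * evW q (v'.map not)) := by rw [← Yu]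
      _ = (c' * Y') * (u' * evW q (v'.map not)) := by simp only [mul_assoc]
      _ = (q-1) • (Y' * (u' * evW q (v'.map not)))
          + q • ((b' * a') * (u' * evW q (v'.map not))) := by
          rw [cY, add_mul, smul_mul_assoc, smul_mul_assoc, mul_assoc]
      _ = _ := by
          congr 1
          rw [show (b' * a') * (u' * evW q (v'.map not))
              = b' * ((a' * u') * evW q (v'.map not)) by simp only [mul_assoc],
            au, ← uc]
          simp only [mul_assoc]
  rw [key]
  apply Submodule.add_mem
  · apply Submodule.smul_mem
    apply rot
    have := memT q s F hF (true :: v'.map not) 1 hs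
    simpa [mul_assoc] using this
  · apply Submodule.smul_mem
    have := memM q s F hF [false, true] (v'.map not)
    simpa [mul_assoc] using this

/-- the K-family lemma -/
lemma Kmem : ∀ j, j ≤ s → ∀ v : List Bool, (j = 1 → v.head? ≠ some true) →
    c' * (evW q v * Y' ^ j) ∈ SS q s F := by
  intro j
  induction j using Nat.strong_induction_on with
  | _ j ih =>
    match j with
    | 0 =>
      intro _ v _
      simpa using memC q s F hF v
    | 1 =>
      intro h1 v hhead
      match v with
      | [] => simpa using mem_cY q s F hF h1
      | false :: v' => simpa using mem_K1_cons q s F hF h1 v'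
      | true :: v' => simp at hhead
    | (j+2) =>
      intro hj v _
      have hX : c' * (evW q v * Y' ^ (j+2)) = (c' * (evW q v * Y' ^ (j+1))) * Y' := by
        rw [pow_succ]; simp only [mul_assoc]
      rw [hX]
      apply rot
      have h2 : Y' * (c' * (evW q v * Y' ^ (j+1)))
          = (Y' * (c' * Y')) * (Y' ^ j * evW q (nIter (j+1) v)) := by
        rw [evW_Ypow q (j+1) v, pow_succ']
        simp only [mul_assoc]
      rw [h2, YcY, add_mul, add_mul, smul_mul_assoc, smul_mul_assoc, smul_mul_assoc]
      set w1 := nIter (j+1) v with hw1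
      refine Submodule.add_mem _ (Submodule.add_mem _ ?_ ?_) ?_
      · apply Submodule.smul_mem
        have h3 : (Y' * Y') * (Y' ^ j * evW q w1)
            = evW q (nIter (j+2) w1) * Y' ^ (j+2) := by
          rw [← Ypow_evW]
          rw [show ((j:ℕ)+2) = 1+(1+j) by ring, pow_add, pow_add, pow_one]
          simp only [mul_assoc]
        rw [h3]
        exact memT q s F hF _ _ hj
      · apply Submodule.smul_mem
        have h3 : (u' * Y') * (Y' ^ j * evW q w1)
            = evW q (true :: nIter (j+1) w1) * Y' ^ (j+1) := by
          calc (u' * Y') * (Y' ^ j * evW q w1)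
              = u' * (Y' ^ (j+1) * evW q w1) := by
                rw [pow_succ']; simp only [mul_assoc]
            _ = u' * (evW q (nIter (j+1) w1) * Y' ^ (j+1)) := by rw [Ypow_evW]
            _ = evW q (true :: nIter (j+1) w1) * Y' ^ (j+1) := by
                show _ = (u' * evW q (nIter (j+1) w1)) * Y' ^ (j+1)
                simp only [mul_assoc]
        rw [h3]
        exact memT q s F hF _ _ (le_trans (Nat.le_succ _) hj)
      · apply Submodule.smul_mem
        have hassoc : (u' * (c' * b')) * (Y' ^ j * evW q w1)
            = u' * ((c' * b') * (Y' ^ j * evW q w1)) := by simp only [mul_assoc]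
        rw [hassoc]
        apply rot
        have h3 : ((c' * b') * (Y' ^ j * evW q w1)) * u'
            = c' * (evW q (false :: (nIter j w1 ++ nIter j [true])) * Y' ^ j) := by
          show _ = c' * ((b' * evW q (nIter j w1 ++ nIter j [true])) * Y' ^ j)
          have hju : Y' ^ j * u' = evW q (nIter j [true]) * Y' ^ j := by
            have h4 := Ypow_evW q j [true]
            simpa [mul_one] using h4
          rw [evW_append, Ypow_evW q j w1]
          calc ((c' * b') * ((evW q (nIter j w1) * Y' ^ j))) * u'
              = c' * (b' * (evW q (nIter j w1) * (Y' ^ j * u'))) := by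
                simp only [mul_assoc]
            _ = c' * (b' * (evW q (nIter j w1) * (evW q (nIter j [true]) * Y' ^ j))) := by
                rw [hju]
            _ = _ := by simp only [mul_assoc]
        rw [h3]
        exact ih j (by omega) (by omega) _ (by intro h; simp)

end L518
namespace L518

set_option linter.unusedSectionVars false
set_option maxHeartbeats 1000000

variable {K : Type*} [CommRing K] (q : K) [Invertible q]

local notation "b'" => bb q
local notation "c'" => cc q
local notation "a'" => aa q
local notation "u'" => uu q
local notation "Y'" => YY q
local notation "bi'" => bi q
local notation "ci'" => ci q

variable (s : ℕ) (F : TLhat K q 1 →ₐ[K] TLhat K q 2) (hF : IsF K q 2 F)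
include hF

/-- K-family for words with leading `false` -/
lemma Kff (j : ℕ) (hj : j ≤ s) (w : List Bool) :
    c' * (evW q (false :: w) * Y' ^ j) ∈ SS q s F :=
  Kmem q s F hF j hj _ (by intro _; simp)

/-- the P2/F'-family lemma : c (bu)^m b c (ev w) Y^j ∈ S for m + j ≤ s -/
lemma P2mem : ∀ m j (w : List Bool), m + j ≤ s →
    c' * (evW q (wbu m) * (b' * (c' * (evW q w * Y' ^ j)))) ∈ SS q s F := by
  intro m
  induction m with
  | zero =>
    intro j w hj
    rw [show evW q (wbu 0) = 1 from rfl, one_mul]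
    have hbr : c' * (b' * (c' * (evW q w * Y' ^ j)))
        = b' * (c' * (b' * (evW q w * Y' ^ j))) := by rw [braid_bc_r]
    rw [hbr]
    apply rot
    have hZ : (c' * (b' * (evW q w * Y' ^ j))) * b'
        = c' * (evW q (false :: (w ++ nIter j [false])) * Y' ^ j) := by
      show _ = c' * ((b' * evW q (w ++ nIter j [false])) * Y' ^ j)
      rw [evW_append]
      calc (c' * (b' * (evW q w * Y' ^ j))) * b'
          = c' * (b' * (evW q w * (Y' ^ j * b'))) := by simp only [mul_assoc]
        _ = c' * (b' * (evW q w * (evW q (nIter j [false]) * Y' ^ j))) := by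
            rw [Ypow_b q]
        _ = _ := by simp only [mul_assoc]
    rw [hZ]
    exact Kff q s F hF j (by omega) _
  | succ m ih =>
    intro j w hj
    set T := b' * (c' * (evW q w * Y' ^ j)) with hT
    have hsplit : c' * (evW q (wbu (m+1)) * T)
        = ⅟q • (b' * (Y' * (c' * (evW q (wbu m) * T))))
          - (⅟q * (q-1)) • (b' * (Y' * (evW q (wbu m) * T))) := by
      show c' * ((b' * (u' * evW q (wbu m))) * T) = _
      calc c' * ((b' * (u' * evW q (wbu m))) * T)
          = (c' * (b' * u')) * (evW q (wbu m) * T) := by simp only [mul_assoc]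
        _ = (b' * Y' * ci') * (evW q (wbu m) * T) := by rw [cbu]
        _ = b' * (Y' * (ci' * (evW q (wbu m) * T))) := by simp only [mul_assoc]
        _ = _ := by
            rw [ci_expand, mul_sub, mul_sub, mul_smul_comm, mul_smul_comm,
              mul_smul_comm, mul_smul_comm]
    rw [hsplit]
    apply Submodule.sub_mem
    · -- T1 : b (Y (c ((bu)^m T)))  →  rotate b Y to the end, becomes P2 (m, j+1)
      apply Submodule.smul_mem
      have h1 : b' * (Y' * (c' * (evW q (wbu m) * T)))
          = (b' * Y') * (c' * (evW q (wbu m) * T)) := by simp only [mul_assoc]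
      rw [h1]
      apply rot
      have h2 : (c' * (evW q (wbu m) * T)) * (b' * Y')
          = c' * (evW q (wbu m) *
              (b' * (c' * (evW q (w ++ nIter j [false]) * Y' ^ (j+1))))) := by
        rw [hT, evW_append]
        calc (c' * (evW q (wbu m) * (b' * (c' * (evW q w * Y' ^ j))))) * (b' * Y')
            = c' * (evW q (wbu m) *
                (b' * (c' * (evW q w * ((Y' ^ j * b') * Y'))))) := by
              simp only [mul_assoc]
          _ = c' * (evW q (wbu m) *
                (b' * (c' * (evW q w * ((evW q (nIter j [false]) * Y' ^ j) * Y'))))) := by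
              rw [Ypow_b q]
          _ = _ := by simp only [mul_assoc, ← pow_succ]
      rw [h2]
      exact ih (j+1) _ (by omega)
    · -- T2 : b (Y ((bu)^m T)) = (bu)^(m+1) Y c (ev w) Y^j → F25
      apply Submodule.smul_mem
      have h1 : b' * (Y' * (evW q (wbu m) * T))
          = evW q (wbu (m+1)) * ((Y' * c') * (evW q w * Y' ^ j)) := by
        calc b' * (Y' * (evW q (wbu m) * T))
            = b' * ((Y' * evW q (wbu m)) * T) := by simp only [mul_assoc]
          _ = b' * (evW q ((wbu m).map not) * (Y' * T)) := by
              rw [Y_evW]; simp only [mul_assoc]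
          _ = b' * (evW q ((wbu m).map not) * (u' * (Y' * (c' * (evW q w * Y' ^ j))))) := by
              rw [hT, show Y' * (b' * (c' * (evW q w * Y' ^ j)))
                  = (Y' * b') * (c' * (evW q w * Y' ^ j)) from by simp only [mul_assoc],
                Yb]
              simp only [mul_assoc]
          _ = (b' * u') ^ (m+1) * (Y' * (c' * (evW q w * Y' ^ j))) := by
              rw [bub_chain]
          _ = _ := by rw [evW_wbu]; simp only [mul_assoc]
      rw [h1, Yc]
      rw [add_mul, sub_mul, smul_mul_assoc, smul_mul_assoc, mul_add, mul_sub,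
        mul_smul_comm, mul_smul_comm]
      refine Submodule.add_mem _ ?_ (Submodule.sub_mem _ ?_ ?_)
      · -- t21 : (bu)^(m+1) (Y (ev w Y^j))
        apply Submodule.smul_mem
        have h2 : evW q (wbu (m+1)) * (Y' * (evW q w * Y' ^ j))
            = evW q (wbu (m+1) ++ w.map not) * Y' ^ (j+1) := by
          rw [evW_append]
          calc evW q (wbu (m+1)) * (Y' * (evW q w * Y' ^ j))
              = evW q (wbu (m+1)) * ((Y' * evW q w) * Y' ^ j) := by
                simp only [mul_assoc]
            _ = evW q (wbu (m+1)) * ((evW q (w.map not) * Y') * Y' ^ j) := by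
                rw [Y_evW]
            _ = _ := by simp only [mul_assoc, ← pow_succ']
        rw [h2]
        exact memT q s F hF _ _ (by omega)
      · -- t22 : (bu)^(m+1) (b c (bu) (ev w) Y^j)
        have h2 : evW q (wbu (m+1)) * ((b' * (c' * (b' * u'))) * (evW q w * Y' ^ j))
            = evW q (wbu (m+1) ++ [false]) *
                (c' * (evW q (false :: true :: w) * Y' ^ j)) := by
          rw [evW_append]
          simp only [evW_ff, evW_tt, evW_nil, mul_one, mul_assoc]
        rw [h2]
        apply rot
        have h3 : (c' * (evW q (false :: true :: w) * Y' ^ j)) *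
              evW q (wbu (m+1) ++ [false])
            = c' * (evW q ((false :: true :: w) ++ nIter j (wbu (m+1) ++ [false]))
                * Y' ^ j) := by
          calc (c' * (evW q (false :: true :: w) * Y' ^ j)) * evW q (wbu (m+1) ++ [false])
              = c' * (evW q (false :: true :: w) * (Y' ^ j * evW q (wbu (m+1) ++ [false]))) := by
                simp only [mul_assoc]
            _ = c' * (evW q (false :: true :: w) *
                  (evW q (nIter j (wbu (m+1) ++ [false])) * Y' ^ j)) := by rw [Ypow_evW]
            _ = _ := by rw [evW_append]; simp only [mul_assoc]
        rw [h3]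
        exact Kff q s F hF j (by omega) _
      · -- t23 : (bu)^(m+1) (c (bu) (ev w) Y^j)
        apply Submodule.smul_mem
        have h2 : evW q (wbu (m+1)) * ((c' * (b' * u')) * (evW q w * Y' ^ j))
            = evW q (wbu (m+1)) * (c' * (evW q (false :: true :: w) * Y' ^ j)) := by
          show _ = evW q (wbu (m+1)) * (c' * ((b' * (u' * evW q w)) * Y' ^ j))
          simp only [mul_assoc]
        rw [h2]
        have h2b : evW q (wbu (m+1)) * (c' * (evW q (false :: true :: w) * Y' ^ j))
            = evW q (wbu (m+1)) * ((c' * (evW q (false :: true :: w) * Y' ^ j)) * 1) := by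
          rw [mul_one]
        rw [h2b]
        apply rot
        have h3 : ((c' * (evW q (false :: true :: w) * Y' ^ j)) * 1) * evW q (wbu (m+1))
            = c' * (evW q ((false :: true :: w) ++ nIter j (wbu (m+1))) * Y' ^ j) := by
          rw [mul_one]
          calc (c' * (evW q (false :: true :: w) * Y' ^ j)) * evW q (wbu (m+1))
              = c' * (evW q (false :: true :: w) * (Y' ^ j * evW q (wbu (m+1)))) := by
                simp only [mul_assoc]
            _ = c' * (evW q (false :: true :: w) *
                  (evW q (nIter j (wbu (m+1))) * Y' ^ j)) := by rw [Ypow_evW]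
            _ = _ := by rw [evW_append]; simp only [mul_assoc]
        rw [h3]
        exact Kff q s F hF j (by omega) _

end L518
namespace L518

set_option linter.unusedSectionVars false
set_option maxHeartbeats 1000000

variable {K : Type*} [CommRing K] (q : K) [Invertible q]

local notation "b'" => bb q
local notation "c'" => cc q
local notation "a'" => aa q
local notation "u'" => uu q
local notation "Y'" => YY q
local notation "bi'" => bi q
local notation "ci'" => ci q

lemma wbu_not (m : ℕ) : false :: (wbu m).map not = wbu m ++ [false] := by
  induction m with
  | zero => rfl
  | succ m ih =>
    show false :: (true :: false :: (wbu m).map not) = false :: true :: (wbu m ++ [false])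
    rw [← ih]

variable (s : ℕ) (F : TLhat K q 1 →ₐ[K] TLhat K q 2) (hF : IsF K q 2 F)
include hF

variable (hs : 1 ≤ s)
include hs

/-- ev w * Y ∈ S -/
lemma memA (w : List Bool) : evW q w * Y' ∈ SS q s F := by
  simpa only [pow_one] using memT q s F hF w 1 hs

/-- K1 for arbitrary words, via rotation and F25 -/
lemma K1any (w : List Bool) : c' * (evW q w * Y') ∈ SS q s F := by
  apply rot
  have h1 : (evW q w * Y') * c' = evW q w * (Y' * c') := by simp only [mul_assoc]
  rw [h1, Yc, mul_add, mul_sub, mul_smul_comm, mul_smul_comm]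
  refine Submodule.add_mem _ ?_ (Submodule.sub_mem _ ?_ ?_)
  · exact Submodule.smul_mem _ _ (memA q s F hF hs w)
  · have := memM q s F hF (w ++ [false]) [false, true]
    simpa only [evW_append, evW_ff, evW_tt, evW_nil, mul_one, mul_assoc] using this
  · apply Submodule.smul_mem
    have := memM q s F hF w [false, true]
    simpa only [evW_ff, evW_tt, evW_nil, mul_one, mul_assoc] using this

/-- b (c (ev w * Y)) ∈ S -/
lemma memBC (w : List Bool) : b' * (c' * (evW q w * Y')) ∈ SS q s F := by
  apply rot
  have h1 : (c' * (evW q w * Y')) * b' = c' * (evW q (w ++ [true]) * Y') := by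
    rw [evW_append]
    calc (c' * (evW q w * Y')) * b' = c' * (evW q w * (Y' * b')) := by
          simp only [mul_assoc]
      _ = c' * (evW q w * (u' * Y')) := by rw [Yb]
      _ = _ := by simp only [evW_tt, evW_nil, mul_one, mul_assoc]
  rw [h1]
  exact K1any q s F hF hs _

/-- c (bu) c (ev w) = bY (ev w) ∈ S -/
lemma memD (w : List Bool) : (c' * (b' * u')) * (c' * evW q w) ∈ SS q s F := by
  have h1 : (c' * (b' * u')) * (c' * evW q w)
      = evW q (false :: w.map not) * Y' := by
    calc (c' * (b' * u')) * (c' * evW q w)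
        = (c' * (b' * u') * c') * evW q w := by simp only [mul_assoc]
      _ = (b' * Y') * evW q w := by rw [cbuc]
      _ = b' * (evW q (w.map not) * Y') := by rw [mul_assoc, Y_evW]
      _ = _ := by simp only [evW_ff, mul_assoc]
  rw [h1]
  exact memA q s F hF hs _

/-- membership through the bi ci expansion -/
lemma bici_mem (x : TLhat K q 2) (h1 : b' * (c' * x) ∈ SS q s F)
    (h2 : b' * x ∈ SS q s F) (h3 : c' * x ∈ SS q s F) (h4 : x ∈ SS q s F) :
    bi' * (ci' * x) ∈ SS q s F := by
  rw [bici]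
  exact Submodule.add_mem _ (Submodule.sub_mem _ (Submodule.sub_mem _
    (Submodule.smul_mem _ _ h1) (Submodule.smul_mem _ _ h2))
    (Submodule.smul_mem _ _ h3)) (Submodule.smul_mem _ _ h4)

/-- c' * (evW w * (c' * (b'*u'))) ∈ S -/
lemma memCxc (w : List Bool) : c' * (evW q w * (c' * (b' * u'))) ∈ SS q s F := by
  have h1 : c' * (evW q w * (c' * (b' * u')))
      = (c' * evW q w) * (c' * (b' * u')) := by simp only [mul_assoc]
  rw [h1]
  apply rot
  exact memD q s F hF hs w

/-- b' * (c' * (evW w * (c' * (b'*u')))) ∈ S -/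
lemma memBCxc (w : List Bool) : b' * (c' * (evW q w * (c' * (b' * u')))) ∈ SS q s F := by
  have h1 : b' * (c' * (evW q w * (c' * (b' * u'))))
      = (b' * (c' * evW q w)) * (c' * (b' * u')) := by simp only [mul_assoc]
  rw [h1]
  apply rot
  have h2 : (c' * (b' * u')) * (b' * (c' * evW q w))
      = c' * (evW q (wbu 1) * (b' * (c' * (evW q w * Y' ^ 0)))) := by
    simp only [wbu, evW_ff, evW_tt, evW_nil, pow_zero, mul_one, mul_assoc]
  rw [h2]
  exact P2mem q s F hF 1 0 w (by omega)

end L518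
namespace L518

set_option linter.unusedSectionVars false
set_option maxHeartbeats 2000000

variable {K : Type*} [CommRing K] (q : K) [Invertible q]

local notation "b'" => bb q
local notation "c'" => cc q
local notation "a'" => aa q
local notation "u'" => uu q
local notation "Y'" => YY q
local notation "bi'" => bi q
local notation "ci'" => ci q

variable (s : ℕ) (F : TLhat K q 1 →ₐ[K] TLhat K q 2) (hF : IsF K q 2 F)
    (hs : 1 ≤ s)
include hF hs

/-- the P1 family -/
lemma P1mem (W : List Bool) :
    bi' * (ci' * (evW q W * (Y' * c'))) ∈ SS q s F := by
  rw [Yc, mul_add, mul_sub, mul_smul_comm, mul_smul_comm, mul_add, mul_sub,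
    mul_smul_comm, mul_smul_comm, mul_add, mul_sub, mul_smul_comm, mul_smul_comm]
  refine Submodule.add_mem _ (Submodule.smul_mem _ _ ?_)
    (Submodule.sub_mem _ ?_ (Submodule.smul_mem _ _ ?_))
  · -- bi ci (evW W * Y')
    refine bici_mem q s F hF hs _ ?_ ?_ ?_ ?_
    · exact memBC q s F hF hs W
    · have := memA q s F hF hs (false :: W)
      simpa only [evW_ff, mul_assoc] using this
    · exact K1any q s F hF hs W
    · exact memA q s F hF hs W
  · -- bi ci (evW W * (b (c (b u))))
    refine bici_mem q s F hF hs _ ?_ ?_ ?_ ?_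
    · have := memBCxc q s F hF hs (W ++ [false])
      simpa only [evW_append, evW_ff, evW_nil, mul_one, mul_assoc] using this
    · have := memM q s F hF (false :: W ++ [false]) [false, true]
      simpa only [evW_append, evW_ff, evW_tt, evW_nil, mul_one, mul_assoc] using this
    · have := memCxc q s F hF hs (W ++ [false])
      simpa only [evW_append, evW_ff, evW_nil, mul_one, mul_assoc] using this
    · have := memM q s F hF (W ++ [false]) [false, true]
      simpa only [evW_append, evW_ff, evW_tt, evW_nil, mul_one, mul_assoc] using this
  · -- bi ci (evW W * (c (b u)))
    refine bici_mem q s F hF hs _ ?_ ?_ ?_ ?_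
    · have := memBCxc q s F hF hs W
      simpa only [evW_ff, evW_tt, evW_nil, mul_one, mul_assoc] using this
    · have := memM q s F hF (false :: W) [false, true]
      simpa only [evW_ff, evW_tt, evW_nil, mul_one, mul_assoc] using this
    · have := memCxc q s F hF hs W
      simpa only [evW_ff, evW_tt, evW_nil, mul_one, mul_assoc] using this
    · have := memM q s F hF W [false, true]
      simpa only [evW_ff, evW_tt, evW_nil, mul_one, mul_assoc] using this

/-- the P2 family -/
lemma P2branch (r : ℕ) :
    bi' * (ci' * (evW q ((wbu s).map not) *
      ((c' * b') * (evW q (wbu r) * c')))) ∈ SS q s F := by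
  have h0 : bi' * (ci' * (evW q ((wbu s).map not) * ((c' * b') * (evW q (wbu r) * c'))))
      = (bi' * (ci' * (evW q ((wbu s).map not) * (c' * (b' * evW q (wbu r)))))) * c' := by
    simp only [mul_assoc]
  rw [h0]
  apply rot
  rw [cbici]
  have claim1 : c' * (b' * (evW q ((wbu s).map not) * (c' * (b' * evW q (wbu r)))))
      = c' * (evW q (wbu s) * (b' * (c' * (evW q (false :: wbu r) * Y' ^ 0)))) := by
    have hb : b' * evW q ((wbu s).map not) = evW q (wbu s ++ [false]) := by
      rw [← wbu_not, evW_ff]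
    calc c' * (b' * (evW q ((wbu s).map not) * (c' * (b' * evW q (wbu r)))))
        = c' * ((b' * evW q ((wbu s).map not)) * (c' * (b' * evW q (wbu r)))) := by
          simp only [mul_assoc]
      _ = c' * (evW q (wbu s ++ [false]) * (c' * (b' * evW q (wbu r)))) := by rw [hb]
      _ = _ := by
          simp only [evW_append, evW_ff, evW_nil, pow_zero, mul_one, mul_assoc]
  refine Submodule.sub_mem _ (Submodule.sub_mem _ (Submodule.smul_mem _ _ ?_)
    (Submodule.smul_mem _ _ ?_)) (Submodule.smul_mem _ _ ?_)
  · -- b' * (c' * (b' * REST))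
    rw [claim1]
    apply rot
    have claim2 : (c' * (evW q (wbu s) * (b' * (c' * (evW q (false :: wbu r) * Y' ^ 0))))) * b'
        = c' * (evW q (wbu s) * (b' * (c' * (evW q ((false :: wbu r) ++ [false]) * Y' ^ 0)))) := by
      simp only [evW_append, evW_ff, evW_nil, pow_zero, mul_one, mul_assoc]
    rw [claim2]
    exact P2mem q s F hF s 0 _ (by omega)
  · rw [claim1]
    exact P2mem q s F hF s 0 _ (by omega)
  · have := memM q s F hF ((wbu s).map not) (false :: wbu r)
    simpa only [evW_ff, mul_assoc] using this

/-- MAIN: the element of Lemma 5.1.8 lies in S -/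
lemma main_mem (r : ℕ) :
    a' * u' * (b' * u') ^ s * a' * (b' * u') ^ r ∈ SS q s F := by
  have hL : a' * u' * (b' * u') ^ s * a' * (b' * u') ^ r
      = c' * (a' * ((b' * u') ^ s * (a' * (b' * u') ^ r))) := by
    rw [au]; simp only [mul_assoc]
  rw [hL]
  apply rot
  rw [show (b' * u') ^ s = evW q (wbu s) from (evW_wbu q s).symm,
    show (b' * u') ^ r = evW q (wbu r) from (evW_wbu q r).symm]
  nth_rewrite 1 [← a_eq' q]
  have hY : (bi' * (ci' * Y') * (evW q (wbu s) * (a' * evW q (wbu r)))) * c'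
      = (q-1) • (bi' * (ci' * (evW q ((wbu s).map not ++ (wbu r).map not) * (Y' * c'))))
        + q • (bi' * (ci' * (evW q ((wbu s).map not) *
            ((c' * b') * (evW q (wbu r) * c'))))) := by
    calc (bi' * (ci' * Y') * (evW q (wbu s) * (a' * evW q (wbu r)))) * c'
        = bi' * (ci' * ((Y' * evW q (wbu s)) * (a' * (evW q (wbu r) * c')))) := by
          simp only [mul_assoc]
      _ = bi' * (ci' * (evW q ((wbu s).map not) * ((Y' * a') * (evW q (wbu r) * c')))) := by
          rw [Y_evW]; simp only [mul_assoc]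
      _ = bi' * (ci' * (evW q ((wbu s).map not) *
            (((q-1) • Y' + q • (c' * b')) * (evW q (wbu r) * c')))) := by rw [Ya]
      _ = (q-1) • (bi' * (ci' * (evW q ((wbu s).map not) *
              (Y' * (evW q (wbu r) * c')))))
          + q • (bi' * (ci' * (evW q ((wbu s).map not) *
              ((c' * b') * (evW q (wbu r) * c'))))) := by
          rw [add_mul, smul_mul_assoc, smul_mul_assoc, mul_add, mul_add, mul_add,
            mul_smul_comm, mul_smul_comm, mul_smul_comm, mul_smul_comm,
            mul_smul_comm, mul_smul_comm]
      _ = _ := by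
          congr 2
          calc bi' * (ci' * (evW q ((wbu s).map not) * (Y' * (evW q (wbu r) * c'))))
              = bi' * (ci' * (evW q ((wbu s).map not) *
                  ((Y' * evW q (wbu r)) * c'))) := by simp only [mul_assoc]
            _ = bi' * (ci' * (evW q ((wbu s).map not) *
                  (evW q ((wbu r).map not) * (Y' * c')))) := by
                rw [Y_evW]; simp only [mul_assoc]
            _ = _ := by rw [evW_append]; simp only [mul_assoc]
  rw [hY]
  exact Submodule.add_mem _
    (Submodule.smul_mem _ _ (P1mem q s F hF hs _))
    (Submodule.smul_mem _ _ (P2branch q s F hF hs r))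

end L518
namespace L518

set_option linter.unusedSectionVars false
set_option maxHeartbeats 1000000

variable {K : Type*} [CommRing K] (q : K) [Invertible q]
variable (s : ℕ) (F : TLhat K q 1 →ₐ[K] TLhat K q 2)

lemma Sty_decomp (z : TLhat K q 2) (hz : z ∈ Sty q s F) :
    ∃ c : ℕ → TLhat K q 2, (∀ j, c j ∈ F.range) ∧
      z = ∑ j ∈ Finset.range (s+1), c j * (YY q) ^ j := by
  induction hz using Submodule.span_induction with
  | mem x hx =>
    obtain ⟨w, j, hj, rfl⟩ := hx
    refine ⟨fun i => if i = j then F w else 0, fun i => ?_, ?_⟩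
    · by_cases h : i = j
      · simp only [h, if_pos rfl]; exact ⟨w, rfl⟩
      · simp only [if_neg h]; exact ⟨0, map_zero F⟩
    · rw [show (∑ i ∈ Finset.range (s+1), (if i = j then F w else 0) * (YY q) ^ i)
          = ∑ i ∈ Finset.range (s+1), (if i = j then F w * (YY q) ^ i else 0) from
        Finset.sum_congr rfl fun i _ => by split <;> simp]
      rw [Finset.sum_ite_eq' (Finset.range (s+1)) j]
      simp [Finset.mem_range, Nat.lt_succ_of_le hj]
  | zero => exact ⟨0, fun j => ⟨0, by simp⟩, by simp⟩
  | add x y _ _ ihx ihy =>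
    obtain ⟨c1, hc1, rfl⟩ := ihx
    obtain ⟨c2, hc2, rfl⟩ := ihy
    refine ⟨c1 + c2, fun j => Subalgebra.add_mem _ (hc1 j) (hc2 j), ?_⟩
    rw [← Finset.sum_add_distrib]
    exact Finset.sum_congr rfl fun i _ => by simp [add_mul]
  | smul a x _ ih =>
    obtain ⟨c1, hc1, rfl⟩ := ih
    refine ⟨a • c1, fun j => Subalgebra.smul_mem _ (hc1 j) a, ?_⟩
    rw [Finset.smul_sum]
    exact Finset.sum_congr rfl fun i _ => by simp [smul_mul_assoc]

lemma trace_Sc (τ : TLhat K q 2 →ₗ[K] K) (hτ : IsTrace K τ)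
    (x : TLhat K q 2) (hx : x ∈ Sc q) : τ x = 0 := by
  induction hx using Submodule.span_induction with
  | mem x hx =>
    obtain ⟨a, b, rfl⟩ := hx
    rw [map_sub, hτ a b, sub_self]
  | zero => simp
  | add x y _ _ ihx ihy => rw [map_add, ihx, ihy, add_zero]
  | smul a x _ ih => rw [map_smul, ih, smul_zero]

end L518

/-- Lemma 5.1.8: for `1 ≤ r ≤ s`, every trace `τ_3` on `TL̂_3(q)`
satisfies `τ_3(g_{a_3} F(t_{a_2}) (g_{σ_1}F(t_{a_2}))^s g_{a_3} (g_{σ_1}F(t_{a_2}))^r)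
= τ_3(Σ_{j=0}^{h} c_j Y^j + M)` with `h ≤ s`, `c_j ∈ Im F` and `M` a linear combination
of Markov elements. -/
theorem lemma_5_1_8
    (K : Type*) [CommRing K] [IsDomain K] [CharZero K]
    (q sq : K) [Invertible q] [Invertible (q + 1)] (hsq : sq * sq = q)
    (r s : ℕ) (hr : 1 ≤ r) (hs : 1 ≤ s) (hrs : r ≤ s)
    (F : TLhat K q 1 →ₐ[K] TLhat K q 2) (hF : IsF K q 2 F) :
    ∃ h ≤ s, ∃ c : ℕ → TLhat K q 2, (∀ j, c j ∈ F.range) ∧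
      ∃ M ∈ Submodule.span K {x : TLhat K q 2 | IsMarkov K q 2 F x},
        ∀ τ : TLhat K q 2 →ₗ[K] K, IsTrace K τ →
          τ (gg K q 2 2 * F (gg K q 1 1) * (gg K q 2 0 * F (gg K q 1 1)) ^ s *
              gg K q 2 2 * (gg K q 2 0 * F (gg K q 1 1)) ^ r) =
          τ ((∑ j ∈ Finset.range (h + 1),
              c j * (gg K q 2 1 * gg K q 2 0 * gg K q 2 2) ^ j) + M) := by
  have hmain := L518.main_mem q s F hF hs r
  rw [L518.SS, Submodule.mem_sup] at hmain
  obtain ⟨y, hy, z, hz, hyz⟩ := hmain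
  rw [Submodule.mem_sup] at hy
  obtain ⟨y1, hy1, y2, hy2, rfl⟩ := hy
  obtain ⟨c, hc, rfl⟩ := L518.Sty_decomp q s F z hz
  refine ⟨s, le_rfl, c, hc, y2, hy2, fun τ hτ => ?_⟩
  have hexpr : gg K q 2 2 * F (gg K q 1 1) * (gg K q 2 0 * F (gg K q 1 1)) ^ s *
      gg K q 2 2 * (gg K q 2 0 * F (gg K q 1 1)) ^ r
      = L518.aa q * L518.uu q * (L518.bb q * L518.uu q) ^ s * L518.aa q *
        (L518.bb q * L518.uu q) ^ r := by
    rw [L518.F_t1 q F hF]; rfl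
  rw [hexpr, ← hyz]
  have hYY : (gg K q 2 1 * gg K q 2 0 * gg K q 2 2) = L518.YY q := rfl
  rw [hYY, map_add, map_add, map_add, L518.trace_Sc q τ hτ y1 hy1, zero_add,
    add_comm (τ y2)]
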